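/- If (X, W) is a weighted design of strength {2,2} on Ω (exact cubature for all products of two functions of the form [x] ↦ Q(x,Hx)/Q(x), H ∈ 𝔭 ⊕ ℝ·id), then (Q, X) is perfect: for every H ∈ 𝔭, if there is c ∈ ℝ with Q(x,Hx)/Q(x) = c for all [x] ∈ X, then H = c·id (hence H = 0, c = 0). The key step: the nonnegative function f([x]) = (Q(x,Hx)/Q(x) − c)² lies in ℱ_{2,2}, its weighted sum over X is zero, hence its average over Ω is zero, hence f ≡ 0 on Ω, forcing H = c·id by the no-constant-function lemma. -/

import Mathlib

open MeasureTheory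

/-- A weighted design of strength `{2,2}` on `Ω` is perfect: if `H ∈ 𝔭`
satisfies `Q(x,Hx)/Q(x) = c` on `X`, then `H = c·id`, hence `H = 0` and `c = 0`. -/
theorem weighted_two_two_design_perfect
    {V : Type*} [NormedAddCommGroup V] [NormedSpace ℝ V] [FiniteDimensional ℝ V]
    [MeasurableSpace V] [BorelSpace V]
    (Q : V →ₗ[ℝ] V →ₗ[ℝ] ℝ)
    (hsymm : ∀ x y, Q x y = Q y x) (hpos : ∀ x : V, x ≠ 0 → 0 < Q x x)
    (Ω : Set V) (hΩ0 : (0 : V) ∉ Ω) (hΩcomp : IsCompact Ω)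
    (hΩspan : Submodule.span ℝ Ω = ⊤)
    (μ : Measure V) [IsProbabilityMeasure μ] (hμΩ : μ Ω = 1)
    (hsupp : ∀ U : Set V, IsOpen U → (U ∩ Ω).Nonempty → 0 < μ (U ∩ Ω))
    (𝔭 : Submodule ℝ (V →L[ℝ] V))
    (hsa : ∀ J ∈ 𝔭, ∀ x y, Q x (J y) = Q (J x) y)
    (hid : ∀ c : ℝ, c • (1 : V →L[ℝ] V) ∈ 𝔭 → c = 0)
    (hexp : ∀ J ∈ 𝔭, ∀ t : ℝ, ∀ x ∈ Ω,
        ∃ c : ℝ, c ≠ 0 ∧ c • (NormedSpace.exp (t • J) x) ∈ Ω)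
    (X : Finset V) (hXne : X.Nonempty) (hXΩ : ↑X ⊆ Ω)
    (W : V → ℝ) (hWpos : ∀ x ∈ X, 0 < W x) (hWsum : ∑ x ∈ X, W x = 1)
    (hdesign : ∀ H₁ ∈ 𝔭 ⊔ Submodule.span ℝ {(1 : V →L[ℝ] V)},
        ∀ H₂ ∈ 𝔭 ⊔ Submodule.span ℝ {(1 : V →L[ℝ] V)},
        ∑ x ∈ X, W x * ((Q x (H₁ x) / Q x x) * (Q x (H₂ x) / Q x x)) =
          ∫ x in Ω, (Q x (H₁ x) / Q x x) * (Q x (H₂ x) / Q x x) ∂μ) :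
    ∀ H ∈ 𝔭, ∀ c : ℝ, (∀ x ∈ X, Q x (H x) / Q x x = c) →
      H = c • (1 : V →L[ℝ] V) ∧ H = 0 ∧ c = 0 := by
  intro H hH c hc
  classical
  -- a continuous version of the bilinear form
  let Q1 : V →ₗ[ℝ] (V →L[ℝ] ℝ) :=
    { toFun := fun x => LinearMap.toContinuousLinearMap (Q x)
      map_add' := by intro a b; ext v; simp
      map_smul' := by intro a b; ext v; simp }
  let Qc : V →L[ℝ] V →L[ℝ] ℝ := LinearMap.toContinuousLinearMap Q1
  have hQc : ∀ a b : V, Qc a b = Q a b := fun a b => rfl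
  set H' : V →L[ℝ] V := H - c • (1 : V →L[ℝ] V) with hH'def
  have hH'apply : ∀ v : V, H' v = H v - c • v := by
    intro v; simp [hH'def]
  have hH'mem : H' ∈ 𝔭 ⊔ Submodule.span ℝ {(1 : V →L[ℝ] V)} :=
    Submodule.sub_mem _ (Submodule.mem_sup_left hH)
      (Submodule.mem_sup_right
        (Submodule.smul_mem _ c (Submodule.mem_span_singleton_self _)))
  have hΩne : ∀ z ∈ Ω, z ≠ 0 := fun z hz h0 => hΩ0 (h0 ▸ hz)
  have hQzz : ∀ z ∈ Ω, Q z z ≠ 0 := fun z hz => ne_of_gt (hpos z (hΩne z hz))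
  -- the numerator of the design function vanishes on X
  have hX0 : ∀ x ∈ X, Q x (H' x) = 0 := by
    intro x hx
    have hne := hQzz x (hXΩ hx)
    have hq : Q x (H x) = c * Q x x := (div_eq_iff hne).mp (hc x hx)
    rw [hH'apply, map_sub, _root_.map_smul]
    simp [hq, smul_eq_mul]
  -- the weighted sum of the square function vanishes
  have hsum0 : ∑ x ∈ X, W x * ((Q x (H' x) / Q x x) * (Q x (H' x) / Q x x)) = 0 :=
    Finset.sum_eq_zero fun x hx => by rw [hX0 x hx, zero_div]; ring
  -- hence the integral of the square function vanishes
  have hint0 : ∫ z in Ω, (Q z (H' z) / Q z z) * (Q z (H' z) / Q z z) ∂μ = 0 := by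
    rw [← hdesign H' hH'mem H' hH'mem]; exact hsum0
  -- continuity facts
  have c1 : Continuous fun z : V => Q z (H' z) := Qc.continuous.clm_apply H'.continuous
  have c2 : Continuous fun z : V => Q z z := Qc.continuous.clm_apply continuous_id
  have hcont : ContinuousOn
      (fun z : V => (Q z (H' z) / Q z z) * (Q z (H' z) / Q z z)) Ω := by
    have hdiv : ContinuousOn (fun z : V => Q z (H' z) / Q z z) Ω :=
      ContinuousOn.div c1.continuousOn c2.continuousOn fun z hz => hQzz z hz
    exact hdiv.mul hdiv
  have hInt : Integrable (fun z : V => (Q z (H' z) / Q z z) * (Q z (H' z) / Q z z))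
      (μ.restrict Ω) := hcont.integrableOn_compact hΩcomp
  have hae : (fun z : V => (Q z (H' z) / Q z z) * (Q z (H' z) / Q z z))
      =ᵐ[μ.restrict Ω] 0 :=
    (integral_eq_zero_iff_of_nonneg (fun z => mul_self_nonneg _) hInt).mp hint0
  -- the numerator vanishes everywhere on Ω
  have hΩ0' : ∀ z ∈ Ω, Q z (H' z) = 0 := by
    by_contra hcon
    push_neg at hcon
    obtain ⟨z₀, hz₀, hz₀ne⟩ := hcon
    set U : Set V := (fun z : V => Q z (H' z)) ⁻¹' {(0 : ℝ)}ᶜ with hU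
    have hUopen : IsOpen U := IsOpen.preimage c1 isOpen_compl_singleton
    have hUne : (U ∩ Ω).Nonempty := ⟨z₀, hz₀ne, hz₀⟩
    have hμU : 0 < μ (U ∩ Ω) := hsupp U hUopen hUne
    have hae' : ∀ᵐ z ∂(μ.restrict Ω),
        (Q z (H' z) / Q z z) * (Q z (H' z) / Q z z) = 0 := hae
    have hnull : μ.restrict Ω {z : V |
        ¬ (Q z (H' z) / Q z z) * (Q z (H' z) / Q z z) = 0} = 0 := ae_iff.mp hae'
    have hsub : U ∩ Ω ⊆ {z : V |
        ¬ (Q z (H' z) / Q z z) * (Q z (H' z) / Q z z) = 0} := by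
      intro z ⟨hzU, hzΩ⟩
      have hnum : Q z (H' z) ≠ 0 := hzU
      have : Q z (H' z) / Q z z ≠ 0 := div_ne_zero hnum (hQzz z hzΩ)
      exact mul_ne_zero this this
    have h0 : μ.restrict Ω (U ∩ Ω) = 0 := measure_mono_null hsub hnull
    rw [Measure.restrict_apply' hΩcomp.measurableSet, Set.inter_assoc,
      Set.inter_self] at h0
    exact absurd h0 hμU.ne'
  -- the numerator vanishes along the exponential flow
  have hexp0 : ∀ x ∈ Ω, ∀ t : ℝ,
      Q (NormedSpace.exp (t • H) x) (H' (NormedSpace.exp (t • H) x)) = 0 := by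
    intro x hx t
    obtain ⟨c₀, hc₀, hmem⟩ := hexp H hH t x hx
    have h1 := hΩ0' _ hmem
    set y := NormedSpace.exp (t • H) x with hy
    have h2 : Q (c₀ • y) (H' (c₀ • y)) = c₀ * (c₀ * Q y (H' y)) := by
      rw [_root_.map_smul, _root_.map_smul, LinearMap.smul_apply,
        _root_.map_smul]
      simp [smul_eq_mul]
    rw [h2] at h1
    rcases mul_eq_zero.mp h1 with h | h
    · exact absurd h hc₀
    rcases mul_eq_zero.mp h with h | h
    · exact absurd h hc₀
    · exact h
  -- differentiating the flow at t = 0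
  have hderiv : ∀ x ∈ Ω, Q (H x) (H' x) + Q x (H' (H x)) = 0 := by
    intro x hx
    have hy : HasDerivAt (fun t : ℝ => NormedSpace.exp (t • H) x) (H x) 0 := by
      have h1 : HasDerivAt (fun t : ℝ => NormedSpace.exp (t • H))
          (NormedSpace.exp ((0 : ℝ) • H) * H) 0 :=
        hasDerivAt_exp_smul_const (𝕂 := ℝ) H 0
      have h2 := h1.clm_apply (hasDerivAt_const (0 : ℝ) x)
      simpa using h2
    have hc1 : HasDerivAt (fun t : ℝ => Qc (NormedSpace.exp (t • H) x))
        (Qc (H x)) 0 := by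
      have := (Qc.hasFDerivAt
        (x := NormedSpace.exp ((0 : ℝ) • H) x)).comp_hasDerivAt 0 hy
      simpa [Function.comp_def] using this
    have hc2 : HasDerivAt (fun t : ℝ => H' (NormedSpace.exp (t • H) x))
        (H' (H x)) 0 := by
      have := (H'.hasFDerivAt
        (x := NormedSpace.exp ((0 : ℝ) • H) x)).comp_hasDerivAt 0 hy
      simpa [Function.comp_def] using this
    have hnum := hc1.clm_apply hc2
    have hx0 : NormedSpace.exp ((0 : ℝ) • H) x = x := by simp
    rw [hx0] at hnum
    have hfun0 : (fun t : ℝ =>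
        Qc (NormedSpace.exp (t • H) x) (H' (NormedSpace.exp (t • H) x)))
        = fun _ => (0 : ℝ) := funext fun t => hexp0 x hx t
    rw [hfun0] at hnum
    have hD := hnum.unique (hasDerivAt_const (0 : ℝ) (0 : ℝ))
    simpa [hQc] using hD
  -- conclude H' x = 0 for x ∈ Ω
  have hH'zero : ∀ x ∈ Ω, H' x = 0 := by
    intro x hx
    have h1 := hderiv x hx
    have hnum0 : Q x (H' x) = 0 := hΩ0' x hx
    have hb : Q x (H x) = c * Q x x := by
      rw [hH'apply, map_sub, _root_.map_smul] at hnum0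
      simp only [smul_eq_mul] at hnum0
      linarith
    have h2 : Q x (H' (H x)) = Q (H x) (H' x) := by
      rw [hH'apply (H x), hH'apply x, map_sub, map_sub, _root_.map_smul,
        _root_.map_smul, hsa H hH x (H x), hsymm x (H x)]
    have h3 : Q (H x) (H' x) = 0 := by linarith
    have h4 : Q (H' x) (H' x) = 0 := by
      have hHx : Q (H x) (H' x) = Q (H' x) (H' x) + c * Q x (H' x) := by
        have : H x = H' x + c • x := by rw [hH'apply]; abel
        rw [this, map_add, _root_.map_smul, LinearMap.add_apply,
          LinearMap.smul_apply, smul_eq_mul]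
      rw [h3, hnum0, mul_zero, add_zero] at hHx
      exact hHx.symm
    by_contra hne
    exact (hpos _ hne).ne' h4
  -- H' vanishes on a spanning set, hence everywhere
  have hH'all : ∀ v : V, H' v = 0 := by
    have hker : (⊤ : Submodule ℝ V) ≤ LinearMap.ker (H' : V →ₗ[ℝ] V) := by
      rw [← hΩspan]
      exact Submodule.span_le.mpr fun z hz => hH'zero z hz
    intro v
    exact hker (Submodule.mem_top : v ∈ ⊤)
  have hH'0 : H' = 0 := ContinuousLinearMap.ext fun v => hH'all v
  have hceq : H = c • (1 : V →L[ℝ] V) := by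
    have := sub_eq_zero.mp (hH'def ▸ hH'0)
    exact this
  have hc0 : c = 0 := hid c (hceq ▸ hH)
  refine ⟨hceq, ?_, hc0⟩
  rw [hceq, hc0, zero_smul]
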